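/- For every b > 0 there exist constants c, σ, γ ∈ (0,1) such that the following holds for all integers n ≥ 1, d ≥ 1: let U be a finite index set with |U| ≤ n and let {v_x}_{x∈U} be vectors in ℝ^d with ‖v_x‖ ≤ b for every x ∈ U and Σ_{x,y∈U} ‖v_x − v_y‖² = n². Then with probability at least γ over a standard Gaussian vector u ∈ ℝ^d, there exist disjoint sets A, B ⊆ U with |A| ≥ 2cn and |B| ≥ 2cn such that (v_y − v_x)·u ≥ σ for every x ∈ A and y ∈ B. -/

import Mathlib

open MeasureTheory ProbabilityTheory Complex
open scoped Real
set_option maxHeartbeats 1000000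
open scoped ENNReal NNReal

/-- The standard Gaussian measure `γ_d` on `ℝ^d`. -/
noncomputable def stdGaussian (d : ℕ) : Measure (Fin d → ℝ) :=
  Measure.pi fun _ => gaussianReal 0 1

/-- Euclidean inner product on `ℝ^d`. -/
def dotp {d : ℕ} (u v : Fin d → ℝ) : ℝ := ∑ i, u i * v i

/-- Euclidean norm on `ℝ^d`. -/
noncomputable def vnorm {d : ℕ} (u : Fin d → ℝ) : ℝ := Real.sqrt (∑ i, u i ^ 2)

/-- **Lemma (ARV projection lemma, Lemma 4).** For every bound `b > 0` there are
constants `c, σ, γ ∈ (0,1)` such that for all `n ≥ 1`, `d ≥ 1` and every family of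
vectors `{v_x}_{x ∈ U}` (indexed by `U ⊆ [n]`) with `‖v_x‖ ≤ b` and
`Σ_{x,y ∈ U} ‖v_x − v_y‖² = n²`, with probability at least `γ` over a standard
Gaussian `u` there are disjoint `A, B ⊆ U` of size at least `2cn` each with
`(v_y − v_x)·u ≥ σ` for every `x ∈ A`, `y ∈ B`. -/

instance (d : ℕ) : IsProbabilityMeasure (stdGaussian d) :=
  Measure.pi.instIsProbabilityMeasure _

lemma coord_charfun (t : ℝ) :
    ∫ x : ℝ, Complex.exp (Complex.I * t * x) ∂(gaussianReal 0 1) =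
      Complex.exp (-(t:ℂ)^2 / 2) := by
  rw [gaussianReal_of_var_ne_zero 0 one_ne_zero]
  have hpdf : MeasureTheory.volume.withDensity (gaussianPDF 0 1) =
      MeasureTheory.volume.withDensity
        (fun x => ((fun x => (gaussianPDFReal 0 1 x).toNNReal) x : ℝ≥0∞)) := rfl
  have hmeas : Measurable (fun x => (gaussianPDFReal 0 1 x).toNNReal) :=
    measurable_real_toNNReal.comp (measurable_gaussianPDFReal 0 1)
  rw [hpdf, integral_withDensity_eq_integral_smul hmeas _]
  have hpt : ∀ x : ℝ, ((gaussianPDFReal 0 1 x).toNNReal : ℝ≥0) • Complex.exp (Complex.I * t * x)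
      = ((Real.sqrt (2 * π) : ℝ) : ℂ)⁻¹ *
        (Complex.exp (Complex.I * t * x) * Complex.exp (-(1/2 : ℂ) * (x:ℂ)^2)) := by
    intro x
    have h1 : gaussianPDFReal 0 1 x = (Real.sqrt (2 * π))⁻¹ * Real.exp (-(1/2) * x^2) := by
      simp [gaussianPDFReal]; ring_nf; tauto
    rw [NNReal.smul_def, Real.coe_toNNReal _ (gaussianPDFReal_nonneg 0 1 x), h1,
      Complex.real_smul, Complex.ofReal_mul, Complex.ofReal_exp, Complex.ofReal_inv]
    push_cast
    ring
  simp_rw [hpt]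
  rw [integral_const_mul, fourierIntegral_gaussian (by norm_num : (0:ℝ) < ((1:ℂ)/2).re) (t:ℂ)]
  have h2 : ((π : ℂ) / (1/2)) ^ (1/2 : ℂ) = ((Real.sqrt (2 * π) : ℝ) : ℂ) := by
    have e1 : ((π : ℂ) / (1/2)) = ((2 * π : ℝ) : ℂ) := by push_cast; ring
    rw [e1, show (1/2 : ℂ) = ((1/2 : ℝ) : ℂ) by norm_num,
      ← Complex.ofReal_cpow (by positivity : (0:ℝ) ≤ 2 * π), Complex.ofReal_inj,
      Real.sqrt_eq_rpow]
  rw [h2, show -(t:ℂ)^2 / (4 * (1/2)) = -(t:ℂ)^2/2 by ring, ← mul_assoc,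
    inv_mul_cancel₀ (Complex.ofReal_ne_zero.mpr (by positivity)), one_mul]

lemma pi_charfun (d : ℕ) (w : Fin d → ℝ) :
    ∫ u, Complex.exp (Complex.I * ((∑ i, w i * u i : ℝ) : ℂ)) ∂(stdGaussian d) =
      Complex.exp (-((∑ i, (w i)^2 : ℝ) : ℂ) / 2) := by
  letI : MeasureSpace ℝ := ⟨gaussianReal 0 1⟩
  haveI : SigmaFinite (volume : Measure ℝ) := by
    have : IsProbabilityMeasure (volume : Measure ℝ) :=
      (inferInstance : IsProbabilityMeasure (gaussianReal 0 1))
    infer_instance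
  have hμ : stdGaussian d = (volume : Measure (Fin d → ℝ)) := rfl
  have hsplit : ∀ u : Fin d → ℝ, Complex.exp (Complex.I * ((∑ i, w i * u i : ℝ) : ℂ))
      = ∏ i, Complex.exp (Complex.I * (w i) * (u i)) := by
    intro u
    rw [← Complex.exp_sum]
    congr 1
    push_cast
    rw [Finset.mul_sum]
    congr 1; funext i; ring
  simp_rw [hsplit, hμ]
  rw [show (volume : Measure (Fin d → ℝ)) = Measure.pi (fun _ => volume) from rfl,
    integral_fintype_prod_eq_prod (ι := Fin d)
    (f := fun i (x : ℝ) => Complex.exp (Complex.I * (w i : ℂ) * x))]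
  have : ∀ i : Fin d, ∫ x : ℝ, Complex.exp (Complex.I * (w i) * x) =
      Complex.exp (-((w i : ℂ))^2/2) := fun i => coord_charfun (w i)
  rw [Finset.prod_congr rfl (fun i _ => this i), ← Complex.exp_sum]
  congr 1
  rw [← Finset.sum_div]
  push_cast
  simp [Finset.sum_neg_distrib]

lemma measurable_proj (d : ℕ) (w : Fin d → ℝ) :
    Measurable (fun u : Fin d → ℝ => ∑ i, w i * u i) :=
  Finset.measurable_sum _ (fun i _ => measurable_const.mul (measurable_pi_apply i))

lemma integral_cos_proj (d : ℕ) (w : Fin d → ℝ) :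
    ∫ u, Real.cos (∑ i, w i * u i) ∂(stdGaussian d) =
      Real.exp (-(∑ i, (w i)^2) / 2) := by
  have hmeas : Measurable (fun u : Fin d → ℝ =>
      Complex.exp (Complex.I * ((∑ i, w i * u i : ℝ) : ℂ))) := by
    apply Complex.measurable_exp.comp
    exact (Complex.measurable_ofReal.comp (measurable_proj d w)).const_mul Complex.I
  have hint : Integrable (fun u : Fin d → ℝ =>
      Complex.exp (Complex.I * ((∑ i, w i * u i : ℝ) : ℂ))) (stdGaussian d) := by
    apply Integrable.mono' (integrable_const 1) hmeas.aestronglyMeasurable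
    filter_upwards with u
    rw [Complex.norm_exp]
    simp
  have hre : ∀ u : Fin d → ℝ, Real.cos (∑ i, w i * u i) =
      RCLike.re (Complex.exp (Complex.I * ((∑ i, w i * u i : ℝ) : ℂ))) := by
    intro u
    rw [show Complex.I * ((∑ i, w i * u i : ℝ) : ℂ)
        = ((∑ i, w i * u i : ℝ) : ℂ) * Complex.I by ring]
    rw [RCLike.re_to_complex, Complex.exp_ofReal_mul_I_re]
  simp_rw [hre]
  rw [integral_re hint, pi_charfun d w]
  rw [RCLike.re_to_complex]
  rw [show (-((∑ i : Fin d, w i ^2 : ℝ):ℂ)/2) = (((-∑ i : Fin d, w i ^ 2)/2 : ℝ) : ℂ) by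
      push_cast; ring,
    ← Complex.ofReal_exp, Complex.ofReal_re]

lemma pair_prob (d : ℕ) (w : Fin d → ℝ) (hw : 1/2 ≤ ∑ i, (w i)^2) :
    1/25 ≤ (stdGaussian d {u | 1/2 ≤ |∑ i, w i * u i|}).toReal := by
  set μ := stdGaussian d
  set X : (Fin d → ℝ) → ℝ := fun u => ∑ i, w i * u i with hX
  have hXm : Measurable X := measurable_proj d w
  set S : Set (Fin d → ℝ) := {u | |X u| < 1/2} with hS
  have hSm : MeasurableSet S := measurableSet_lt hXm.abs measurable_const
  -- integrability of cos X
  have hcosm : Measurable fun u => Real.cos (X u) := Real.measurable_cos.comp hXm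
  have hcosint : Integrable (fun u => Real.cos (X u)) μ := by
    apply Integrable.mono' (integrable_const 1) hcosm.aestronglyMeasurable
    filter_upwards with u
    rw [Real.norm_eq_abs]
    exact Real.abs_cos_le_one _
  -- cos(1/2) ≥ 7/8
  have hc12 : (7:ℝ)/8 ≤ Real.cos (1/2) := by
    have := Real.one_sub_sq_div_two_le_cos (x := 1/2)
    norm_num at this ⊢
    linarith
  have hCpos : (0:ℝ) < Real.cos (1/2) + 1 := by linarith
  -- pointwise indicator bound
  have hpt : ∀ u, S.indicator (fun _ => (1:ℝ)) u ≤
      (Real.cos (X u) + 1) / (Real.cos (1/2) + 1) := by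
    intro u
    rcases le_or_gt (1/2 : ℝ) |X u| with h | h
    · rw [Set.indicator_of_notMem (by simpa [hS] using not_lt.mpr h)]
      have : (-1:ℝ) ≤ Real.cos (X u) := Real.neg_one_le_cos _
      apply div_nonneg <;> linarith
    · rw [Set.indicator_of_mem (by simpa [hS] using h)]
      rw [le_div_iff₀ hCpos, one_mul]
      have h7 : Real.cos (1/2) ≤ Real.cos |X u| :=
        Real.cos_le_cos_of_nonneg_of_le_pi (abs_nonneg _) (by linarith [Real.pi_gt_three]) h.le
      rw [Real.cos_abs] at h7
      linarith
  -- integrate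
  have hSbound : (μ S).toReal ≤ 24/25 := by
    have h1 : (μ S).toReal = ∫ u, S.indicator (fun _ => (1:ℝ)) u ∂μ := by
      rw [integral_indicator_const (1:ℝ) hSm]; simp; rfl
    have h2 : ∫ u, S.indicator (fun _ => (1:ℝ)) u ∂μ ≤
        ∫ u, (Real.cos (X u) + 1) / (Real.cos (1/2) + 1) ∂μ := by
      apply integral_mono _ _ hpt
      · exact (integrable_const 1).indicator hSm
      · exact ((hcosint.add (integrable_const 1)).div_const _)
    have h3 : ∫ u, (Real.cos (X u) + 1) / (Real.cos (1/2) + 1) ∂μ =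
        (Real.exp (-(∑ i, (w i)^2) / 2) + 1) / (Real.cos (1/2) + 1) := by
      rw [integral_div, integral_add hcosint (integrable_const 1), integral_const]
      have := integral_cos_proj d w
      simp only [hX]
      rw [this]
      simp
    have hexp : Real.exp (-(∑ i, (w i)^2) / 2) ≤ 4/5 := by
      have h4 : Real.exp (-(∑ i, (w i)^2) / 2) ≤ Real.exp (-(1/4)) :=
        Real.exp_le_exp.mpr (by linarith)
      have h5 : (5:ℝ)/4 ≤ Real.exp (1/4) := by linarith [Real.add_one_le_exp (1/4:ℝ)]
      have h6 : Real.exp (-(1/4:ℝ)) ≤ 4/5 := by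
        rw [Real.exp_neg]
        calc (Real.exp (1/4:ℝ))⁻¹ ≤ ((5:ℝ)/4)⁻¹ := by
              apply inv_anti₀ (by norm_num) h5
          _ = 4/5 := by norm_num
      linarith
    calc (μ S).toReal ≤ (Real.exp (-(∑ i, (w i)^2) / 2) + 1) / (Real.cos (1/2) + 1) := by
          rw [h1]; rw [← h3]; exact h2
      _ ≤ (9/5) / (15/8) := by
          apply div_le_div₀ (by norm_num) (by linarith) (by norm_num) (by linarith)
      _ = 24/25 := by norm_num
  have hset : {u : Fin d → ℝ | 1/2 ≤ |X u|} = Sᶜ := by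
    ext u; simp [hS, not_lt]
  have hcompl : (μ Sᶜ).toReal = 1 - (μ S).toReal := by
    rw [measure_compl hSm (measure_ne_top _ _), measure_univ,
      ENNReal.toReal_sub_of_le prob_le_one ENNReal.one_ne_top, ENNReal.toReal_one]
  calc (1:ℝ)/25 ≤ 1 - (μ S).toReal := by linarith
    _ = (μ Sᶜ).toReal := hcompl.symm
    _ = (μ {u : Fin d → ℝ | 1/2 ≤ |X u|}).toReal := by rw [hset]

lemma threshold_lemma {n : ℕ} (U : Finset (Fin n)) (h : Fin n → ℝ) (σ : ℝ) (hσ : 0 < σ)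
    (t : ℕ) (ht1 : 1 ≤ t) (htU : t ≤ U.card)
    (K : ℝ) (hK : K ≤ ((U ×ˢ U).filter (fun q => σ ≤ |h q.2 - h q.1|)).card)
    (hcount : 4 * ((t:ℝ) - 1) * U.card < K) :
    ∃ A B : Finset (Fin n), A ⊆ U ∧ B ⊆ U ∧ Disjoint A B ∧ t ≤ A.card ∧ t ≤ B.card ∧
      ∀ x ∈ A, ∀ y ∈ B, σ ≤ h y - h x := by
  classical
  have hUne : U.Nonempty := Finset.card_pos.mp (lt_of_lt_of_le ht1 htU)
  have himg : (U.image h).Nonempty := hUne.image h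
  set S : Finset ℝ := (U.image h).filter
    (fun s => t ≤ (U.filter (fun x => h x ≤ s)).card) with hSdef
  have hSne : S.Nonempty := by
    refine ⟨(U.image h).max' himg, Finset.mem_filter.mpr ⟨(U.image h).max'_mem himg, ?_⟩⟩
    have : U.filter (fun x => h x ≤ (U.image h).max' himg) = U := by
      apply Finset.filter_true_of_mem
      intro x hx
      exact (U.image h).le_max' _ (Finset.mem_image_of_mem h hx)
    rw [this]; exact htU
  set s₁ := S.min' hSne with hs₁
  have hs₁S : s₁ ∈ S := S.min'_mem hSne
  set A := U.filter (fun x => h x ≤ s₁) with hAdef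
  set B := U.filter (fun x => s₁ + σ ≤ h x) with hBdef
  set L := U.filter (fun x => h x < s₁) with hLdef
  have hA : t ≤ A.card := (Finset.mem_filter.mp hs₁S).2
  have hL : L.card < t := by
    by_contra hcon
    push_neg at hcon
    have hLne : L.Nonempty := Finset.card_pos.mp (lt_of_lt_of_le ht1 hcon)
    have hLimg : (L.image h).Nonempty := hLne.image h
    set s' := (L.image h).max' hLimg with hs'
    obtain ⟨x₀, hx₀L, hx₀⟩ := Finset.mem_image.mp ((L.image h).max'_mem hLimg)
    have hs'lt : s' < s₁ := by
      rw [hs', ← hx₀]; exact (Finset.mem_filter.mp hx₀L).2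
    have hs'S : s' ∈ S := by
      refine Finset.mem_filter.mpr ⟨?_, ?_⟩
      · rw [hs', ← hx₀]; exact Finset.mem_image_of_mem h (Finset.mem_filter.mp hx₀L).1
      · refine le_trans hcon (Finset.card_le_card ?_)
        intro x hx
        refine Finset.mem_filter.mpr ⟨(Finset.mem_filter.mp hx).1, ?_⟩
        exact (L.image h).le_max' _ (Finset.mem_image_of_mem h hx)
    exact absurd (S.min'_le _ hs'S) (not_le.mpr hs'lt)
  have hB : t ≤ B.card := by
    by_contra hcon
    push_neg at hcon
    set P := (U ×ˢ U).filter (fun q => σ ≤ |h q.2 - h q.1|) with hPdef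
    have hsub : P ⊆ (L ∪ B) ×ˢ U ∪ U ×ˢ (L ∪ B) := by
      intro q hq
      obtain ⟨hqU, hqsep⟩ := Finset.mem_filter.mp hq
      obtain ⟨hq1, hq2⟩ := Finset.mem_product.mp hqU
      by_contra hnot
      have h1 : q.1 ∉ L ∪ B := fun hmem =>
        hnot (Finset.mem_union_left _ (Finset.mem_product.mpr ⟨hmem, hq2⟩))
      have h2 : q.2 ∉ L ∪ B := fun hmem =>
        hnot (Finset.mem_union_right _ (Finset.mem_product.mpr ⟨hq1, hmem⟩))
      rw [Finset.mem_union] at h1 h2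
      push_neg at h1 h2
      have e1 : s₁ ≤ h q.1 := not_lt.mp (fun hlt => h1.1 (Finset.mem_filter.mpr ⟨hq1, hlt⟩))
      have e2 : h q.1 < s₁ + σ := not_le.mp (fun hle => h1.2 (Finset.mem_filter.mpr ⟨hq1, hle⟩))
      have e3 : s₁ ≤ h q.2 := not_lt.mp (fun hlt => h2.1 (Finset.mem_filter.mpr ⟨hq2, hlt⟩))
      have e4 : h q.2 < s₁ + σ := not_le.mp (fun hle => h2.2 (Finset.mem_filter.mpr ⟨hq2, hle⟩))
      have : |h q.2 - h q.1| < σ := abs_lt.mpr ⟨by linarith, by linarith⟩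
      linarith
    have c1 : P.card ≤ (L ∪ B).card * U.card + U.card * (L ∪ B).card := by
      refine (Finset.card_le_card hsub).trans ((Finset.card_union_le _ _).trans ?_)
      rw [Finset.card_product, Finset.card_product]
    have c2 : (L ∪ B).card + 2 ≤ 2 * t := by
      have := Finset.card_union_le L B
      omega
    have hU0 : (0:ℝ) ≤ (U.card : ℝ) := Nat.cast_nonneg _
    have c1' : (P.card : ℝ) ≤ ((L ∪ B).card : ℝ) * U.card + U.card * (L ∪ B).card := by
      exact_mod_cast c1
    have c2' : ((L ∪ B).card : ℝ) ≤ 2 * ((t:ℝ) - 1) := by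
      have : ((L ∪ B).card : ℝ) + 2 ≤ 2 * t := by exact_mod_cast c2
      linarith
    have hfinal : (P.card : ℝ) ≤ 4 * ((t:ℝ) - 1) * U.card := by
      nlinarith [c1', c2', hU0]
    linarith [hK, hcount, hfinal]
  refine ⟨A, B, Finset.filter_subset _ _, Finset.filter_subset _ _, ?_, hA, hB, ?_⟩
  · rw [Finset.disjoint_left]
    intro x hxA hxB
    have e1 := (Finset.mem_filter.mp hxA).2
    have e2 := (Finset.mem_filter.mp hxB).2
    linarith
  · intro x hxA y hyB
    have e1 := (Finset.mem_filter.mp hxA).2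
    have e2 := (Finset.mem_filter.mp hyB).2
    linarith

theorem arv_projection_lemma (b : ℝ) (hb : 0 < b) :
    ∃ c σ γ : ℝ, c ∈ Set.Ioo (0:ℝ) 1 ∧ σ ∈ Set.Ioo (0:ℝ) 1 ∧ γ ∈ Set.Ioo (0:ℝ) 1 ∧
      ∀ n d : ℕ, 1 ≤ n → 1 ≤ d → ∀ (U : Finset (Fin n)) (v : Fin n → Fin d → ℝ),
        (∀ x ∈ U, vnorm (v x) ≤ b) →
        (∑ x ∈ U, ∑ y ∈ U, (∑ i, (v x i - v y i) ^ 2)) = (n : ℝ) ^ 2 →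
        ENNReal.ofReal γ ≤
          stdGaussian d {u | ∃ A B : Finset (Fin n), A ⊆ U ∧ B ⊆ U ∧ Disjoint A B ∧
            2 * c * n ≤ A.card ∧ 2 * c * n ≤ B.card ∧
            ∀ x ∈ A, ∀ y ∈ B, σ ≤ dotp (fun i => v y i - v x i) u} := by
  classical
  set B : ℝ := max b 1 with hBdef
  have hB1 : (1:ℝ) ≤ B := le_max_right _ _
  have hB0 : (0:ℝ) < B := lt_of_lt_of_le one_pos hB1
  have hbB : b ≤ B := le_max_left _ _
  refine ⟨1/(12800*B^2), 1/2, 1/(400*B^2), ⟨by positivity, ?_⟩, ⟨by norm_num, by norm_num⟩,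
    ⟨by positivity, ?_⟩, ?_⟩
  · rw [div_lt_one (by positivity)]; nlinarith
  · rw [div_lt_one (by positivity)]; nlinarith
  intro n d hn hd U v hnorm hsum
  set μ := stdGaussian d with hμdef
  set c : ℝ := 1/(12800*B^2) with hcdef
  have hc0 : 0 < c := by positivity
  have hn0 : (0:ℝ) < n := by exact_mod_cast hn
  -- basic norm bounds
  have g0 : ∀ x ∈ U, ∑ i, (v x i)^2 ≤ B^2 := by
    intro x hx
    have h1 : vnorm (v x) ≤ B := le_trans (hnorm x hx) hbB
    have h2 : (0:ℝ) ≤ ∑ i, (v x i)^2 := by positivity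
    have h3 := Real.sq_sqrt h2
    have h4 : Real.sqrt (∑ i, (v x i)^2) ≤ B := h1
    nlinarith [Real.sqrt_nonneg (∑ i, (v x i)^2)]
  have g1 : ∀ x ∈ U, ∀ y ∈ U, ∑ i, (v x i - v y i)^2 ≤ 4*B^2 := by
    intro x hx y hy
    have e : ∑ i, (v x i - v y i)^2
        = ((∑ i, (v x i)^2) + ∑ i, (v y i)^2) - 2*(∑ i, v x i * v y i) := by
      have h5 : ∀ i : Fin d, (v x i - v y i)^2
          = ((v x i)^2 + (v y i)^2) - 2*(v x i * v y i) := fun i => by ring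
      simp_rw [h5]
      rw [Finset.sum_sub_distrib, Finset.sum_add_distrib, ← Finset.mul_sum]
    have cs := Finset.sum_mul_sq_le_sq_mul_sq Finset.univ (v x) (v y)
    have hx2 := g0 x hx
    have hy2 := g0 y hy
    have hB2 : (0:ℝ) < B^2 := by positivity
    have px : (0:ℝ) ≤ ∑ i, (v x i)^2 := by positivity
    have py : (0:ℝ) ≤ ∑ i, (v y i)^2 := by positivity
    have prod_le : (∑ i, (v x i)^2) * (∑ i, (v y i)^2) ≤ B^2 * B^2 :=
      mul_le_mul hx2 hy2 py (by positivity)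
    have hS2 : (∑ i, v x i * v y i)^2 ≤ B^2 * B^2 := le_trans cs prod_le
    have hSlb : -(B^2) ≤ ∑ i, v x i * v y i := by
      nlinarith [sq_nonneg ((∑ i, v x i * v y i) + B^2)]
    rw [e]
    linarith
  -- far pairs
  have hUn : (U.card : ℝ) ≤ (n:ℝ) := by
    have h1 : U.card ≤ n := by
      have := Finset.card_le_univ U
      simpa using this
    exact_mod_cast h1
  set P : Finset (Fin n × Fin n) := U ×ˢ U with hPdef
  set Far : Finset (Fin n × Fin n) :=
    P.filter (fun q => 1/2 ≤ ∑ i, (v q.1 i - v q.2 i)^2) with hFardef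
  have hPcard : (P.card : ℝ) ≤ (n:ℝ)^2 := by
    rw [hPdef, Finset.card_product]
    push_cast
    nlinarith [Nat.cast_nonneg (α := ℝ) U.card]
  have hsumP : ∑ q ∈ P, (∑ i, (v q.1 i - v q.2 i)^2) = (n:ℝ)^2 := by
    rw [hPdef, Finset.sum_product]
    exact hsum
  have hFar : (n:ℝ)^2 / (8*B^2) ≤ Far.card := by
    have split := Finset.sum_filter_add_sum_filter_not P
      (fun q => 1/2 ≤ ∑ i, (v q.1 i - v q.2 i)^2) (fun q => ∑ i, (v q.1 i - v q.2 i)^2)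
    have hfar_le : ∑ q ∈ Far, (∑ i, (v q.1 i - v q.2 i)^2) ≤ (Far.card : ℝ) * (4*B^2) := by
      have := Finset.sum_le_card_nsmul Far (fun q => ∑ i, (v q.1 i - v q.2 i)^2) (4*B^2) ?_
      · simpa [nsmul_eq_mul] using this
      · intro q hq
        have hqP := (Finset.mem_filter.mp hq).1
        obtain ⟨h1, h2⟩ := Finset.mem_product.mp hqP
        exact g1 q.1 h1 q.2 h2
    have hnot_le : ∑ q ∈ P.filter (fun q => ¬ (1/2 ≤ ∑ i, (v q.1 i - v q.2 i)^2)),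
        (∑ i, (v q.1 i - v q.2 i)^2) ≤ (n:ℝ)^2 * (1/2) := by
      have h1 := Finset.sum_le_card_nsmul
        (P.filter (fun q => ¬ (1/2 ≤ ∑ i, (v q.1 i - v q.2 i)^2)))
        (fun q => ∑ i, (v q.1 i - v q.2 i)^2) (1/2)
        (fun q hq => le_of_lt (not_le.mp (Finset.mem_filter.mp hq).2))
      rw [nsmul_eq_mul] at h1
      refine h1.trans ?_
      have h2 : ((P.filter (fun q => ¬ (1/2 ≤ ∑ i, (v q.1 i - v q.2 i)^2))).card : ℝ)
          ≤ (n:ℝ)^2 := le_trans (by exact_mod_cast Finset.card_filter_le _ _) hPcard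
      linarith
    rw [div_le_iff₀ (by positivity)]
    rw [hFardef]
    have heq : ∑ q ∈ Far, (∑ i, (v q.1 i - v q.2 i)^2)
        + ∑ q ∈ P.filter (fun q => ¬ (1/2 ≤ ∑ i, (v q.1 i - v q.2 i)^2)),
          (∑ i, (v q.1 i - v q.2 i)^2) = (n:ℝ)^2 := by
      rw [hFardef]
      rw [split]
      exact hsumP
    linarith
  -- separation events
  set sep : Fin n × Fin n → Set (Fin d → ℝ) :=
    fun q => {u | 1/2 ≤ |∑ i, (v q.2 i - v q.1 i) * u i|} with hsepdef
  have hsepm : ∀ q, MeasurableSet (sep q) := fun q =>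
    measurableSet_le measurable_const (measurable_proj d (fun i => v q.2 i - v q.1 i)).abs
  have hpair : ∀ q ∈ Far, 1/25 ≤ (μ (sep q)).toReal := by
    intro q hq
    have h1 := (Finset.mem_filter.mp hq).2
    have h2 : 1/2 ≤ ∑ i, (v q.2 i - v q.1 i)^2 := by
      refine le_trans h1 (le_of_eq (Finset.sum_congr rfl (fun i _ => by ring)))
    exact pair_prob d (fun i => v q.2 i - v q.1 i) h2
  set F : (Fin d → ℝ) → ℝ := fun u => ∑ q ∈ P, (sep q).indicator (fun _ => (1:ℝ)) u
    with hFdef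
  have hFm : Measurable F :=
    Finset.measurable_sum _ (fun q _ => measurable_const.indicator (hsepm q))
  have hFint : Integrable F μ :=
    integrable_finset_sum _ (fun q _ => (integrable_const 1).indicator (hsepm q))
  have hFle : ∀ u, F u ≤ (n:ℝ)^2 := by
    intro u
    have h1 : F u ≤ ∑ q ∈ P, (1:ℝ) := by
      apply Finset.sum_le_sum
      intro q _
      rw [Set.indicator_apply]
      split <;> norm_num
    rw [Finset.sum_const, nsmul_eq_mul, mul_one] at h1
    exact h1.trans hPcard
  have hEF : ∫ u, F u ∂μ = ∑ q ∈ P, (μ (sep q)).toReal := by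
    rw [hFdef, integral_finset_sum _ (fun q _ => (integrable_const 1).indicator (hsepm q))]
    refine Finset.sum_congr rfl (fun q _ => ?_)
    rw [integral_indicator_const (1:ℝ) (hsepm q), smul_eq_mul, mul_one]; rfl
  have hEFlb : (n:ℝ)^2 / (200*B^2) ≤ ∫ u, F u ∂μ := by
    rw [hEF]
    calc (n:ℝ)^2/(200*B^2) = ((n:ℝ)^2/(8*B^2)) * (1/25) := by ring
      _ ≤ (Far.card : ℝ) * (1/25) := mul_le_mul_of_nonneg_right hFar (by norm_num)
      _ ≤ ∑ q ∈ Far, (μ (sep q)).toReal := by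
          have h1 := Finset.card_nsmul_le_sum Far (fun q => (μ (sep q)).toReal) (1/25) hpair
          rw [nsmul_eq_mul] at h1
          linarith
      _ ≤ ∑ q ∈ P, (μ (sep q)).toReal :=
          Finset.sum_le_sum_of_subset_of_nonneg (Finset.filter_subset _ _)
            (fun q _ _ => ENNReal.toReal_nonneg)
  set Ev : Set (Fin d → ℝ) := {u | (n:ℝ)^2/(400*B^2) ≤ F u} with hEvdef
  have hEvm : MeasurableSet Ev := measurableSet_le measurable_const hFm
  have hμE : 1/(400*B^2) ≤ (μ Ev).toReal := by
    have h1 : ∫ u in Ev, F u ∂μ ≤ (μ Ev).toReal * (n:ℝ)^2 := by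
      calc ∫ u in Ev, F u ∂μ ≤ ∫ u in Ev, (n:ℝ)^2 ∂μ :=
            setIntegral_mono_on hFint.integrableOn
              (integrableOn_const (measure_lt_top μ Ev).ne) hEvm (fun u _ => hFle u)
        _ = (μ Ev).toReal * (n:ℝ)^2 := by rw [setIntegral_const, smul_eq_mul]; rfl
    have h2 : ∫ u in Evᶜ, F u ∂μ ≤ (n:ℝ)^2/(400*B^2) := by
      calc ∫ u in Evᶜ, F u ∂μ ≤ ∫ u in Evᶜ, (n:ℝ)^2/(400*B^2) ∂μ := by
            apply setIntegral_mono_on hFint.integrableOn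
              (integrableOn_const (measure_lt_top μ Evᶜ).ne) hEvm.compl
            intro u hu
            exact le_of_lt (not_le.mp hu)
        _ = (μ Evᶜ).toReal * ((n:ℝ)^2/(400*B^2)) := by rw [setIntegral_const, smul_eq_mul]; rfl
        _ ≤ 1 * ((n:ℝ)^2/(400*B^2)) := by
            apply mul_le_mul_of_nonneg_right _ (by positivity)
            simpa using ENNReal.toReal_mono ENNReal.one_ne_top (prob_le_one (μ := μ) (s := Evᶜ))
        _ = (n:ℝ)^2/(400*B^2) := one_mul _
    have h3 : ∫ u in Ev, F u ∂μ + ∫ u in Evᶜ, F u ∂μ = ∫ u, F u ∂μ :=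
      integral_add_compl hEvm hFint
    have h4 : (n:ℝ)^2/(400*B^2) ≤ (μ Ev).toReal * (n:ℝ)^2 := by
      have : (n:ℝ)^2/(200*B^2) - (n:ℝ)^2/(400*B^2) = (n:ℝ)^2/(400*B^2) := by ring
      linarith
    have hn2 : (0:ℝ) < (n:ℝ)^2 := by positivity
    by_contra hcon
    push_neg at hcon
    have := mul_lt_mul_of_pos_right hcon hn2
    rw [div_mul_eq_mul_div, one_mul] at this
    have : (μ Ev).toReal * (n:ℝ)^2 < (n:ℝ)^2/(400*B^2) := by
      calc (μ Ev).toReal * (n:ℝ)^2 < 1/(400*B^2) * (n:ℝ)^2 := mul_lt_mul_of_pos_right hcon hn2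
        _ = (n:ℝ)^2/(400*B^2) := by ring
    linarith
  -- inclusion of the event
  have hincl : Ev ⊆ {u : Fin d → ℝ | ∃ A B' : Finset (Fin n), A ⊆ U ∧ B' ⊆ U ∧
      Disjoint A B' ∧ 2 * c * n ≤ A.card ∧ 2 * c * n ≤ B'.card ∧
      ∀ x ∈ A, ∀ y ∈ B', 1/2 ≤ dotp (fun i => v y i - v x i) u} := by
    intro u hu
    have huF : (n:ℝ)^2/(400*B^2) ≤ F u := hu
    set h' : Fin n → ℝ := fun x => ∑ i, v x i * u i with hh'def
    have hXdiff : ∀ q : Fin n × Fin n,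
        (∑ i, (v q.2 i - v q.1 i) * u i) = h' q.2 - h' q.1 := by
      intro q
      rw [hh'def, ← Finset.sum_sub_distrib]
      exact Finset.sum_congr rfl (fun i _ => by ring)
    have hFcard : F u = ((P.filter (fun q => 1/2 ≤ |h' q.2 - h' q.1|)).card : ℝ) := by
      have e : ∀ q ∈ P, (sep q).indicator (fun _ => (1:ℝ)) u
          = if 1/2 ≤ |h' q.2 - h' q.1| then (1:ℝ) else 0 := by
        intro q _
        have hiff : u ∈ sep q ↔ 1/2 ≤ |h' q.2 - h' q.1| := by
          simp only [hsepdef, Set.mem_setOf_eq, hXdiff q]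
        rw [Set.indicator_apply]
        simp only [hiff]
      show ∑ q ∈ P, (sep q).indicator (fun _ => (1:ℝ)) u = _
      rw [Finset.sum_congr rfl e, Finset.sum_boole]
    set t : ℕ := ⌈2*c*(n:ℝ)⌉₊ with htdef
    have ht1 : 1 ≤ t := Nat.one_le_iff_ne_zero.mpr (by
      rw [htdef]
      exact Nat.ceil_pos.mpr (by positivity) |>.ne')
    have ht2cn : 2*c*(n:ℝ) ≤ t := Nat.le_ceil _
    have htlt : (t:ℝ) < 2*c*(n:ℝ) + 1 := Nat.ceil_lt_add_one (by positivity)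
    have hUcard_lb : (n:ℝ) ≤ 2*B*(U.card:ℝ) := by
      have hsq : (n:ℝ)^2 ≤ (U.card:ℝ)^2 * (4*B^2) := by
        rw [← hsumP]
        have h5 := Finset.sum_le_card_nsmul P (fun q => ∑ i, (v q.1 i - v q.2 i)^2) (4*B^2)
          (fun q hq => by
            obtain ⟨h1, h2⟩ := Finset.mem_product.mp hq
            exact g1 q.1 h1 q.2 h2)
        rw [nsmul_eq_mul] at h5
        refine h5.trans (le_of_eq ?_)
        rw [hPdef, Finset.card_product]
        push_cast
        ring
      by_contra hcon
      push_neg at hcon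
      have hUc0 : (0:ℝ) ≤ 2*B*(U.card:ℝ) :=
        mul_nonneg (mul_nonneg (by norm_num) hB0.le) (Nat.cast_nonneg _)
      nlinarith [mul_self_lt_mul_self hUc0 hcon]
    have htU : t ≤ U.card := by
      have hUc1 : 1 ≤ U.card := by
        by_contra h0
        push_neg at h0
        have : U.card = 0 := by omega
        rw [this] at hUcard_lb
        push_cast at hUcard_lb
        linarith
      rcases le_or_gt (2*c*(n:ℝ)) 1 with hcase | hcase
      · have : t ≤ 1 := by
          rw [htdef]
          exact_mod_cast Nat.ceil_le.mpr (by exact_mod_cast hcase)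
        omega
      · have h6 : (t:ℝ) < 4*c*(n:ℝ) := by linarith
        have h7 : 4*c*(n:ℝ) ≤ (n:ℝ)/(2*B) := by
          have e1 : 4*c*(n:ℝ) = (n:ℝ)/(3200*B^2) := by rw [hcdef]; field_simp; ring
          rw [e1]
          apply div_le_div_of_nonneg_left hn0.le (by positivity)
          nlinarith
        have h8 : (n:ℝ)/(2*B) ≤ (U.card:ℝ) := by
          rw [div_le_iff₀ (by positivity)]
          calc (n:ℝ) ≤ 2*B*(U.card:ℝ) := hUcard_lb
            _ = (U.card:ℝ) * (2*B) := by ring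
        have : (t:ℝ) ≤ (U.card:ℝ) := by linarith
        exact_mod_cast this
    have hcount : 4*((t:ℝ)-1)*(U.card:ℝ) < F u := by
      have ht1R : (1:ℝ) ≤ (t:ℝ) := by exact_mod_cast ht1
      have hstep : 4*((t:ℝ)-1)*(U.card:ℝ) < 8*c*(n:ℝ)^2 := by
        nlinarith [mul_pos (sub_pos.mpr (by linarith : (t:ℝ)-1 < 2*c*(n:ℝ))) hn0,
          mul_nonneg (by linarith : (0:ℝ) ≤ (t:ℝ)-1) (by linarith [hUn] : (0:ℝ) ≤ (n:ℝ)-(U.card:ℝ))]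
      have hcc : 8*c*(n:ℝ)^2 ≤ (n:ℝ)^2/(400*B^2) := by
        rw [hcdef]
        have e2 : 8*(1/(12800*B^2))*(n:ℝ)^2 = (n:ℝ)^2/(1600*B^2) := by
          field_simp
          ring
        rw [e2]
        apply div_le_div_of_nonneg_left (by positivity) (by positivity)
        nlinarith
      linarith
    obtain ⟨A, B', hAU, hBU, hdisj, hAt, hBt, hsep'⟩ :=
      threshold_lemma U h' (1/2) one_half_pos t ht1 htU (F u) (le_of_eq hFcard) hcount
    refine ⟨A, B', hAU, hBU, hdisj, ?_, ?_, ?_⟩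
    · exact le_trans ht2cn (by exact_mod_cast hAt)
    · exact le_trans ht2cn (by exact_mod_cast hBt)
    · intro x hx y hy
      have := hsep' x hx y hy
      rw [dotp]
      calc (1:ℝ)/2 ≤ h' y - h' x := this
        _ = ∑ i, (v y i - v x i) * u i := (hXdiff (x, y)).symm
  calc ENNReal.ofReal (1/(400*B^2)) ≤ ENNReal.ofReal ((μ Ev).toReal) :=
        ENNReal.ofReal_le_ofReal hμE
    _ = μ Ev := ENNReal.ofReal_toReal (measure_ne_top μ Ev)
    _ ≤ _ := measure_mono hincl
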